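/- Let μ > 0, let B ∈ ℝ^{m×m} be symmetric positive semidefinite, let r ∈ ℝ^m, and let α ≥ 1. Then the matrices (μ/α)I + B and μI + B are positive definite, and ‖((μ/α)I + B)⁻¹ r − (μI + B)⁻¹ r‖₂ ≤ ((α − 1)/μ)·‖r‖₂. Equivalently, writing λ(α) = (μI + αB)⁻¹r, one has ‖α·λ(α) − λ(1)‖₂ ≤ ((α − 1)/μ)·‖r‖₂. -/

import Mathlib

open Matrix

/-- The Euclidean norm of a vector in `ℝᵏ`. -/
noncomputable def eNorm {k : ℕ} (x : Fin k → ℝ) : ℝ := Real.sqrt (∑ i, x i ^ 2)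

lemma eNorm_nonneg {k : ℕ} (x : Fin k → ℝ) : 0 ≤ eNorm x := Real.sqrt_nonneg _

lemma eNorm_sq {k : ℕ} (x : Fin k → ℝ) : eNorm x ^ 2 = ∑ i, x i ^ 2 :=
  Real.sq_sqrt (Finset.sum_nonneg fun i _ => sq_nonneg _)

lemma eNorm_smul {k : ℕ} (c : ℝ) (x : Fin k → ℝ) : eNorm (c • x) = |c| * eNorm x := by
  unfold eNorm
  have : ∑ i, (c • x) i ^ 2 = c ^ 2 * ∑ i, x i ^ 2 := by
    rw [Finset.mul_sum]; congr 1; ext i; simp [Pi.smul_apply, mul_pow, smul_eq_mul]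
  rw [this, Real.sqrt_mul (sq_nonneg c), Real.sqrt_sq_eq_abs]

lemma posDef_smul_one_add {k : ℕ} (c : ℝ) (hc : 0 < c)
    (B : Matrix (Fin k) (Fin k) ℝ) (hB : B.PosSemidef) :
    (c • (1 : Matrix (Fin k) (Fin k) ℝ) + B).PosDef := by
  refine Matrix.PosDef.add_posSemidef ?_ hB
  refine Matrix.PosDef.of_dotProduct_mulVec_pos ?_ ?_
  · simp [Matrix.IsHermitian, Matrix.conjTranspose_smul]
  · intro x hx
    have hdp : star x ⬝ᵥ ((c • (1 : Matrix (Fin k) (Fin k) ℝ)) *ᵥ x) = c * ∑ i, x i ^ 2 := by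
      simp only [Matrix.smul_mulVec, Matrix.one_mulVec, dotProduct, Finset.mul_sum, star,
        Pi.smul_apply, smul_eq_mul, sq, star_trivial]
      exact Finset.sum_congr rfl fun i _ => by ring
    rw [hdp]
    have hpos : 0 < ∑ i, x i ^ 2 := by
      rcases Function.ne_iff.mp hx with ⟨i, hi⟩
      exact Finset.sum_pos' (fun j _ => sq_nonneg _) ⟨i, Finset.mem_univ i, sq_pos_of_ne_zero hi⟩
    exact mul_pos hc hpos

lemma inv_bound {k : ℕ} (c : ℝ) (hc : 0 < c)
    (B : Matrix (Fin k) (Fin k) ℝ) (hB : B.PosSemidef) (x : Fin k → ℝ) :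
    eNorm ((c • (1 : Matrix (Fin k) (Fin k) ℝ) + B)⁻¹ *ᵥ x) ≤ c⁻¹ * eNorm x := by
  set M := c • (1 : Matrix (Fin k) (Fin k) ℝ) + B with hM
  have hMpd := posDef_smul_one_add c hc B hB
  have hdet : IsUnit M.det := isUnit_iff_ne_zero.mpr (ne_of_gt hMpd.det_pos)
  set y := M⁻¹ *ᵥ x with hy
  have hMy : M *ᵥ y = x := by
    rw [hy, Matrix.mulVec_mulVec, Matrix.mul_nonsing_inv M hdet, Matrix.one_mulVec]
  -- lower bound on quadratic form
  have hquad : c * (eNorm y) ^ 2 ≤ y ⬝ᵥ x := by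
    rw [← hMy, hM, Matrix.add_mulVec, dotProduct_add, Matrix.smul_mulVec,
      Matrix.one_mulVec, eNorm_sq]
    have h1 : y ⬝ᵥ (c • y) = c * ∑ i, y i ^ 2 := by
      simp only [dotProduct, Pi.smul_apply, smul_eq_mul, Finset.mul_sum, sq]
      exact Finset.sum_congr rfl fun i _ => by ring
    have h2 : 0 ≤ y ⬝ᵥ (B *ᵥ y) := by simpa [star] using hB.dotProduct_mulVec_nonneg y
    rw [h1]
    linarith
  -- Cauchy–Schwarz
  have hcs : y ⬝ᵥ x ≤ eNorm y * eNorm x := by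
    have h := Finset.sum_mul_sq_le_sq_mul_sq Finset.univ y x
    have := Real.sqrt_le_sqrt h
    have hle : y ⬝ᵥ x ≤ Real.sqrt ((∑ i, y i * x i) ^ 2) := by
      rw [Real.sqrt_sq_eq_abs]; exact le_abs_self _
    calc y ⬝ᵥ x ≤ Real.sqrt ((∑ i, y i * x i) ^ 2) := hle
      _ ≤ Real.sqrt ((∑ i, y i ^ 2) * ∑ i, x i ^ 2) := Real.sqrt_le_sqrt h
      _ = eNorm y * eNorm x := by
          rw [Real.sqrt_mul (Finset.sum_nonneg fun i _ => sq_nonneg _)]; rfl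
  have key : c * (eNorm y) ^ 2 ≤ eNorm y * eNorm x := le_trans hquad hcs
  rcases eq_or_lt_of_le (eNorm_nonneg y) with h0 | h0
  · rw [← h0]; exact mul_nonneg (by positivity) (eNorm_nonneg x)
  · have : c * eNorm y ≤ eNorm x := by
      have := le_of_mul_le_mul_right (by rw [sq] at key; linarith [key] : c * eNorm y * eNorm y ≤ eNorm x * eNorm y) h0
      exact this
    calc eNorm y = c⁻¹ * (c * eNorm y) := by field_simp
      _ ≤ c⁻¹ * eNorm x := mul_le_mul_of_nonneg_left this (by positivity)

theorem enki_resolvent_perturbation {m : ℕ} (μ : ℝ) (hμ : 0 < μ)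
    (B : Matrix (Fin m) (Fin m) ℝ) (hB : B.PosSemidef) (r : Fin m → ℝ)
    (α : ℝ) (hα : 1 ≤ α) :
    ((μ / α) • (1 : Matrix (Fin m) (Fin m) ℝ) + B).PosDef ∧
    (μ • (1 : Matrix (Fin m) (Fin m) ℝ) + B).PosDef ∧
    eNorm (((μ / α) • (1 : Matrix (Fin m) (Fin m) ℝ) + B)⁻¹ *ᵥ r -
        (μ • (1 : Matrix (Fin m) (Fin m) ℝ) + B)⁻¹ *ᵥ r) ≤ ((α - 1) / μ) * eNorm r ∧
    eNorm (α • ((μ • (1 : Matrix (Fin m) (Fin m) ℝ) + α • B)⁻¹ *ᵥ r) -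
        (μ • (1 : Matrix (Fin m) (Fin m) ℝ) + B)⁻¹ *ᵥ r) ≤ ((α - 1) / μ) * eNorm r := by
  have hα0 : 0 < α := lt_of_lt_of_le one_pos hα
  have hν : 0 < μ / α := div_pos hμ hα0
  set ν : ℝ := μ / α with hνdef
  set P : Matrix (Fin m) (Fin m) ℝ := ν • 1 + B with hPdef
  set Q : Matrix (Fin m) (Fin m) ℝ := μ • 1 + B with hQdef
  have hPpd := posDef_smul_one_add ν hν B hB
  have hQpd := posDef_smul_one_add μ hμ B hB
  have hPdet : IsUnit P.det := isUnit_iff_ne_zero.mpr (ne_of_gt hPpd.det_pos)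
  have hQdet : IsUnit Q.det := isUnit_iff_ne_zero.mpr (ne_of_gt hQpd.det_pos)
  -- matrix identity  P⁻¹ - Q⁻¹ = (μ - ν) • (P⁻¹ * Q⁻¹)
  have hQP : Q - P = (μ - ν) • (1 : Matrix (Fin m) (Fin m) ℝ) := by
    rw [hPdef, hQdef, add_sub_add_right_eq_sub, ← sub_smul]
  have hid : P⁻¹ - Q⁻¹ = (μ - ν) • (P⁻¹ * Q⁻¹) := by
    calc P⁻¹ - Q⁻¹ = P⁻¹ * (Q * Q⁻¹) - (P⁻¹ * P) * Q⁻¹ := by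
          rw [Matrix.mul_nonsing_inv Q hQdet, Matrix.nonsing_inv_mul P hPdet, mul_one, one_mul]
      _ = P⁻¹ * ((Q - P) * Q⁻¹) := by
          rw [Matrix.sub_mul, Matrix.mul_sub, mul_assoc]
      _ = (μ - ν) • (P⁻¹ * Q⁻¹) := by
          rw [hQP, Matrix.smul_mul, one_mul, Matrix.mul_smul]
  have hvec : P⁻¹ *ᵥ r - Q⁻¹ *ᵥ r = (μ - ν) • (P⁻¹ *ᵥ (Q⁻¹ *ᵥ r)) := by
    rw [← Matrix.sub_mulVec, hid, Matrix.smul_mulVec, Matrix.mulVec_mulVec]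
  -- bound the perturbation
  have hbnd : eNorm (P⁻¹ *ᵥ r - Q⁻¹ *ᵥ r) ≤ ((α - 1) / μ) * eNorm r := by
    rw [hvec, eNorm_smul]
    have hμν : 0 ≤ μ - ν := by
      rw [hνdef, sub_nonneg]
      exact div_le_self (le_of_lt hμ) hα
    rw [abs_of_nonneg hμν]
    have h1 : eNorm (P⁻¹ *ᵥ (Q⁻¹ *ᵥ r)) ≤ ν⁻¹ * eNorm (Q⁻¹ *ᵥ r) :=
      inv_bound ν hν B hB _
    have h2 : eNorm (Q⁻¹ *ᵥ r) ≤ μ⁻¹ * eNorm r := inv_bound μ hμ B hB r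
    have h3 : eNorm (P⁻¹ *ᵥ (Q⁻¹ *ᵥ r)) ≤ ν⁻¹ * (μ⁻¹ * eNorm r) := by
      refine le_trans h1 ?_
      exact mul_le_mul_of_nonneg_left h2 (le_of_lt (inv_pos.mpr hν))
    calc (μ - ν) * eNorm (P⁻¹ *ᵥ (Q⁻¹ *ᵥ r))
        ≤ (μ - ν) * (ν⁻¹ * (μ⁻¹ * eNorm r)) := mul_le_mul_of_nonneg_left h3 hμν
      _ = ((α - 1) / μ) * eNorm r := by
          rw [hνdef]; field_simp
  -- last part: α • (μ•1 + α•B)⁻¹ r = P⁻¹ r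
  have hresc : (μ • (1 : Matrix (Fin m) (Fin m) ℝ) + α • B) = α • P := by
    rw [hPdef, smul_add, smul_smul, hνdef, mul_div_cancel₀ μ (ne_of_gt hα0)]
  have hinv : (α • P)⁻¹ = α⁻¹ • P⁻¹ := by
    apply Matrix.inv_eq_right_inv
    rw [Matrix.smul_mul, Matrix.mul_smul, Matrix.mul_nonsing_inv P hPdet, smul_smul,
      mul_inv_cancel₀ (ne_of_gt hα0), one_smul]
  have hlast : α • ((μ • (1 : Matrix (Fin m) (Fin m) ℝ) + α • B)⁻¹ *ᵥ r) = P⁻¹ *ᵥ r := by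
    rw [hresc, hinv, Matrix.smul_mulVec, smul_smul, mul_inv_cancel₀ (ne_of_gt hα0), one_smul]
  exact ⟨hPpd, hQpd, hbnd, by rw [hlast]; exact hbnd⟩
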